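/- Assume the nozzle geometry and the 2D CGO function, with s·ε ≤ 1, and let [T₁, T₂] ⊆ [0, T] with T₂ − T₁ = ε². Let α₁, α₄ ∈ (0, 1) and C₁, C₄ > 0. Let H : ℂ → ℂ satisfy |H(z) − H(z′)| ≤ C₁|z − z′|^{α₁} for all z, z′; let u, v : D̄_ε × [T₁, T₂] → ℂ satisfy |u(x,t) − u(x₀,t₀)| ≤ C₄(‖x − x₀‖ + |t − t₀|^{1/2}) and |v(x,t) − v(x₀,t₀)| ≤ C₄(‖x − x₀‖ + |t − t₀|^{1/2}) for all pairs of points; and suppose u((0,0), t₀) = v((0,0), t₀) for some t₀ ∈ [T₁, T₂]. Then there exists a constant C > 0 depending only on μ, λ, T, C₁, C₄ such that |∫_{D_ε} ( [(H(u) − H(v))·u₀](x, T₂) − [(H(u) − H(v))·u₀](x, T₁) ) dx| ≤ C·ε^{1+l+α₁α₄ l₀}. -/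

import Mathlib

noncomputable section

/-- Partial derivative in the first spatial variable. -/
def pd1 (f : ℝ → ℝ → ℝ → ℂ) (x₁ x₂ t : ℝ) : ℂ := deriv (fun y => f y x₂ t) x₁

/-- Partial derivative in the second spatial variable. -/
def pd2 (f : ℝ → ℝ → ℝ → ℂ) (x₁ x₂ t : ℝ) : ℂ := deriv (fun y => f x₁ y t) x₂

/-- Partial derivative in time. -/
def pdt (f : ℝ → ℝ → ℝ → ℂ) (x₁ x₂ t : ℝ) : ℂ := deriv (fun τ => f x₁ x₂ τ) t

/-- Spatial Laplacian `Δ = ∂₁² + ∂₂²`. -/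
def lap (f : ℝ → ℝ → ℝ → ℂ) (x₁ x₂ t : ℝ) : ℂ :=
  pd1 (pd1 f) x₁ x₂ t + pd2 (pd2 f) x₁ x₂ t

/-- The 2D complex geometric optics function
`u₀(x,t) = exp(μ^{-1/2}((s d₁ + i√(s²+λ) d₂) x₁ + (s d₂ − i√(s²+λ) d₁) x₂) + λ t)`. -/
def cgo2 (μ lam s d₁ d₂ : ℝ) (x₁ x₂ t : ℝ) : ℂ :=
  Complex.exp (((Real.sqrt μ : ℝ) : ℂ)⁻¹ *
      (((s : ℂ) * (d₁ : ℂ) + Complex.I * ((Real.sqrt (s ^ 2 + lam) : ℝ) : ℂ) * (d₂ : ℂ)) *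
          (x₁ : ℂ) +
        ((s : ℂ) * (d₂ : ℂ) - Complex.I * ((Real.sqrt (s ^ 2 + lam) : ℝ) : ℂ) * (d₁ : ℂ)) *
          (x₂ : ℂ)) +
    (lam : ℂ) * (t : ℂ))

/-- The parabolic distance `ρ = ‖x − y‖ + |t − τ|^{1/2}` in two space dimensions. -/
def prho (x₁ x₂ t y₁ y₂ τ : ℝ) : ℝ :=
  Real.sqrt ((x₁ - y₁) ^ 2 + (x₂ - y₂) ^ 2) + Real.sqrt |t - τ|

/-- Euclidean norm of the spatial gradient of `w`. -/
def gradNorm (w : ℝ → ℝ → ℝ → ℂ) (x₁ x₂ t : ℝ) : ℝ :=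
  Real.sqrt (‖pd1 w x₁ x₂ t‖ ^ 2 + ‖pd2 w x₁ x₂ t‖ ^ 2)

/-- The closed nozzle space–time cylinder
`D̄_ε × [T₁,T₂]`, `D_ε = {0 ≤ x₁ ≤ ε^l, γ(x₁) ≤ x₂ ≤ γ(x₁)+ε}`. -/
def nozzleCyl (ε l T₁ T₂ : ℝ) (γ : ℝ → ℝ) : Set (ℝ × ℝ × ℝ) :=
  {p : ℝ × ℝ × ℝ | p.1 ∈ Set.Icc 0 (ε ^ l) ∧ p.2.1 ∈ Set.Icc (γ p.1) (γ p.1 + ε) ∧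
    p.2.2 ∈ Set.Icc T₁ T₂}

/-- Parabolic `C^{1,α}` bound with constant `C` on the set `S`. -/
structure ParabolicC1 (w : ℝ → ℝ → ℝ → ℂ) (S : Set (ℝ × ℝ × ℝ)) (C α : ℝ) : Prop where
  bdd : ∀ p ∈ S, ‖w p.1 p.2.1 p.2.2‖ ≤ C
  grad_bdd : ∀ p ∈ S, gradNorm w p.1 p.2.1 p.2.2 ≤ C
  time_bdd : ∀ p ∈ S, ‖pdt w p.1 p.2.1 p.2.2‖ ≤ C
  lip : ∀ p ∈ S, ∀ q ∈ S,
    ‖w p.1 p.2.1 p.2.2 - w q.1 q.2.1 q.2.2‖ ≤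
      C * prho p.1 p.2.1 p.2.2 q.1 q.2.1 q.2.2
  grad_holder : ∀ p ∈ S, ∀ q ∈ S,
    Real.sqrt (‖pd1 w p.1 p.2.1 p.2.2 - pd1 w q.1 q.2.1 q.2.2‖ ^ 2 +
        ‖pd2 w p.1 p.2.1 p.2.2 - pd2 w q.1 q.2.1 q.2.2‖ ^ 2) ≤
      C * prho p.1 p.2.1 p.2.2 q.1 q.2.1 q.2.2 ^ α
  taylor : ∀ p ∈ S, ∀ q ∈ S,
    ‖w p.1 p.2.1 p.2.2 - w q.1 q.2.1 q.2.2
        - pd1 w q.1 q.2.1 q.2.2 * ((p.1 - q.1 : ℝ) : ℂ)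
        - pd2 w q.1 q.2.1 q.2.2 * ((p.2.1 - q.2.1 : ℝ) : ℂ)
        - pdt w q.1 q.2.1 q.2.2 * ((p.2.2 - q.2.2 : ℝ) : ℂ)‖ ≤
      C * prho p.1 p.2.1 p.2.2 q.1 q.2.1 q.2.2 ^ (1 + α)

/-- `w` is (jointly) continuously differentiable in `(x,t)` on the set `S`. -/
structure SmoothC1 (w : ℝ → ℝ → ℝ → ℂ) (S : Set (ℝ × ℝ × ℝ)) : Prop where
  cont : ContinuousOn (fun p : ℝ × ℝ × ℝ => w p.1 p.2.1 p.2.2) S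
  jdiff : ∀ p ∈ S, DifferentiableAt ℝ (fun q : ℝ × ℝ × ℝ => w q.1 q.2.1 q.2.2) p
  cont1 : ContinuousOn (fun p : ℝ × ℝ × ℝ => pd1 w p.1 p.2.1 p.2.2) S
  cont2 : ContinuousOn (fun p : ℝ × ℝ × ℝ => pd2 w p.1 p.2.1 p.2.2) S
  contt : ContinuousOn (fun p : ℝ × ℝ × ℝ => pdt w p.1 p.2.1 p.2.2) S


lemma cgo2_abs (μ lam s d₁ d₂ x₁ x₂ t : ℝ) :
    ‖cgo2 μ lam s d₁ d₂ x₁ x₂ t‖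
      = Real.exp ((Real.sqrt μ)⁻¹ * (s * d₁ * x₁ + s * d₂ * x₂) + lam * t) := by
  rw [cgo2, Complex.norm_exp, ← Complex.ofReal_inv]
  congr 1
  simp [Complex.add_re, Complex.mul_re, Complex.sub_re, Complex.ofReal_re, Complex.ofReal_im,
    Complex.I_re, Complex.I_im, Complex.add_im, Complex.mul_im, Complex.sub_im]

lemma abs_sub_le'' (x y : ℂ) : ‖x - y‖ ≤ ‖x‖ + ‖y‖ := by
  exact norm_sub_le x y

lemma sqrt_sq_add_sq_le (a b : ℝ) : Real.sqrt (a ^ 2 + b ^ 2) ≤ |a| + |b| := by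
  have h : a ^ 2 + b ^ 2 ≤ (|a| + |b|) ^ 2 := by
    nlinarith [abs_nonneg a, abs_nonneg b, sq_abs a, sq_abs b]
  have := Real.sqrt_le_sqrt h
  rwa [Real.sqrt_sq (by positivity)] at this

set_option maxHeartbeats 1600000 in
/-- **Temporal boundary-term estimate (quantitative Lemma 3.7).**
If `H` is `α₁`-Hölder (constant `C₁`), `u, v` are parabolically Lipschitz (constant `C₄`)
on `D̄_ε × [T₁,T₂]` and `u = v` at the base point `((0,0), t₀)`, then
`|∫_{D_ε} (H(u) − H(v)) u₀ |_{T₁}^{T₂} dx| ≤ C ε^{1+l+α₁α₄l₀}`,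
with `C` depending only on `μ, λ, T, C₁, C₄`. -/
theorem temporal_boundary_estimate_I5
    (μ lam T C₁ C₄ : ℝ) (hμ : 0 < μ) (hlam : 0 < lam) (hT : 0 < T)
    (hC₁ : 0 < C₁) (hC₄ : 0 < C₄) :
    ∃ C > 0, ∀ (ε l s d₁ d₂ T₁ T₂ α₁ α₄ t₀ : ℝ) (γ : ℝ → ℝ)
      (H : ℂ → ℂ) (u v : ℝ → ℝ → ℝ → ℂ),
      ε ∈ Set.Ioo (0:ℝ) 1 → 0 < l →
      ContDiffOn ℝ 2 γ (Set.Icc 0 (ε ^ l)) → γ 0 = 0 →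
      derivWithin γ (Set.Icc 0 (ε ^ l)) 0 = 0 →
      (∀ x ∈ Set.Icc (0:ℝ) (ε ^ l), |γ x| ≤ ε) →
      d₁ < 0 → d₂ < 0 → d₁ ^ 2 + d₂ ^ 2 = 1 →
      0 < s → s * ε ≤ 1 →
      0 ≤ T₁ → T₂ ≤ T → T₂ - T₁ = ε ^ 2 →
      α₁ ∈ Set.Ioo (0:ℝ) 1 → α₄ ∈ Set.Ioo (0:ℝ) 1 → t₀ ∈ Set.Icc T₁ T₂ →
      (∀ z z', ‖H z - H z'‖ ≤ C₁ * ‖z - z'‖ ^ α₁) →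
      (∀ p ∈ nozzleCyl ε l T₁ T₂ γ, ∀ q ∈ nozzleCyl ε l T₁ T₂ γ,
        ‖u p.1 p.2.1 p.2.2 - u q.1 q.2.1 q.2.2‖
          ≤ C₄ * prho p.1 p.2.1 p.2.2 q.1 q.2.1 q.2.2) →
      (∀ p ∈ nozzleCyl ε l T₁ T₂ γ, ∀ q ∈ nozzleCyl ε l T₁ T₂ γ,
        ‖v p.1 p.2.1 p.2.2 - v q.1 q.2.1 q.2.2‖
          ≤ C₄ * prho p.1 p.2.1 p.2.2 q.1 q.2.1 q.2.2) →
      u 0 0 t₀ = v 0 0 t₀ →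
      ‖(∫ x₁ in (0:ℝ)..(ε ^ l), ∫ x₂ in (γ x₁)..(γ x₁ + ε),
            ((H (u x₁ x₂ T₂) - H (v x₁ x₂ T₂)) * cgo2 μ lam s d₁ d₂ x₁ x₂ T₂
              - (H (u x₁ x₂ T₁) - H (v x₁ x₂ T₁)) * cgo2 μ lam s d₁ d₂ x₁ x₂ T₁))‖
        ≤ C * ε ^ (1 + l + α₁ * α₄ * min l 1) := by
  set M := Real.exp ((Real.sqrt μ)⁻¹ + lam * T) with hMdef
  have hM : 0 < M := Real.exp_pos _
  have hmax : (0:ℝ) < max 1 (8 * C₄) := lt_of_lt_of_le one_pos (le_max_left _ _)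
  refine ⟨2 * M * C₁ * max 1 (8 * C₄), by positivity, ?_⟩
  intro ε l s d₁ d₂ T₁ T₂ α₁ α₄ t₀ γ H u v hε hl hγsm hγ0 hγ' hγb hd₁ hd₂ hd hs hsε
    hT₁ hT₂ hT21 hα₁ hα₄ ht₀ hH hu hv huv
  obtain ⟨hε0, hε1⟩ := hε
  have hεl : (0:ℝ) < ε ^ l := Real.rpow_pos_of_pos hε0 l
  set l₀ := min l 1 with hl₀def
  have hl₀ : 0 < l₀ := lt_min hl one_pos
  have hεll₀ : ε ^ l ≤ ε ^ l₀ :=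
    Real.rpow_le_rpow_of_exponent_ge hε0 hε1.le (min_le_left l 1)
  have hεl₀ : (0:ℝ) < ε ^ l₀ := Real.rpow_pos_of_pos hε0 l₀
  have hε1l₀ : ε ≤ ε ^ l₀ := by
    calc ε = ε ^ (1:ℝ) := (Real.rpow_one ε).symm
    _ ≤ ε ^ l₀ := Real.rpow_le_rpow_of_exponent_ge hε0 hε1.le (min_le_right l 1)
  -- base point in the cylinder
  have hq : ((0:ℝ), (0:ℝ), t₀) ∈ nozzleCyl ε l T₁ T₂ γ := by
    refine ⟨⟨le_refl 0, hεl.le⟩, ⟨?_, ?_⟩, ht₀⟩ <;>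
      simp only [hγ0] <;> linarith
  have hd₂1 : -d₂ ≤ 1 := by nlinarith [sq_nonneg d₁, sq_nonneg (d₂ + 1)]
  have hsqrtμ : (0:ℝ) ≤ (Real.sqrt μ)⁻¹ := inv_nonneg.mpr (Real.sqrt_nonneg μ)
  set e := α₁ * α₄ * l₀ with hedef
  -- pointwise bound on each term
  have key : ∀ x₁ ∈ Set.Ioc (0:ℝ) (ε ^ l), ∀ x₂ ∈ Set.Ioc (γ x₁) (γ x₁ + ε),
      ∀ t ∈ Set.Icc T₁ T₂,
      ‖(H (u x₁ x₂ t) - H (v x₁ x₂ t)) * cgo2 μ lam s d₁ d₂ x₁ x₂ t‖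
        ≤ M * C₁ * max 1 (8 * C₄) * ε ^ e := by
    intro x₁ hx₁ x₂ hx₂ t ht
    have hp : (x₁, x₂, t) ∈ nozzleCyl ε l T₁ T₂ γ :=
      ⟨⟨hx₁.1.le, hx₁.2⟩, ⟨hx₂.1.le, hx₂.2⟩, ht⟩
    have hγbx : |γ x₁| ≤ ε := hγb x₁ ⟨hx₁.1.le, hx₁.2⟩
    have hγlo : -ε ≤ γ x₁ := neg_le_of_abs_le hγbx
    have hγhi : γ x₁ ≤ ε := le_of_abs_le hγbx
    -- parabolic distance to base point
    have hρ : prho x₁ x₂ t 0 0 t₀ ≤ 4 * ε ^ l₀ := by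
      have h1 : Real.sqrt ((x₁ - 0) ^ 2 + (x₂ - 0) ^ 2) ≤ |x₁ - 0| + |x₂ - 0| :=
        sqrt_sq_add_sq_le _ _
      have hx₁abs : |x₁ - 0| ≤ ε ^ l := by
        rw [sub_zero, abs_of_pos hx₁.1]; exact hx₁.2
      have hx₂abs : |x₂ - 0| ≤ 2 * ε := by
        rw [sub_zero, abs_le]
        constructor
        · linarith [hx₂.1]
        · linarith [hx₂.2]
      have h2 : Real.sqrt |t - t₀| ≤ ε := by
        have habs : |t - t₀| ≤ ε ^ 2 := by
          rw [abs_le]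
          constructor
          · linarith [ht.1, ht₀.2]
          · linarith [ht.2, ht₀.1]
        calc Real.sqrt |t - t₀| ≤ Real.sqrt (ε ^ 2) := Real.sqrt_le_sqrt habs
        _ = ε := Real.sqrt_sq hε0.le
      have : prho x₁ x₂ t 0 0 t₀ ≤ ε ^ l + 2 * ε + ε := by
        unfold prho; linarith
      linarith
    have hρ0 : 0 ≤ prho x₁ x₂ t 0 0 t₀ := by
      unfold prho; positivity
    -- |u - v| at the point
    have huvb : ‖u x₁ x₂ t - v x₁ x₂ t‖ ≤ 8 * C₄ * ε ^ l₀ := by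
      have heq : u x₁ x₂ t - v x₁ x₂ t
          = (u x₁ x₂ t - u 0 0 t₀) - (v x₁ x₂ t - v 0 0 t₀) := by
        rw [huv]; ring
      rw [heq]
      calc ‖(u x₁ x₂ t - u 0 0 t₀) - (v x₁ x₂ t - v 0 0 t₀)‖
          ≤ ‖u x₁ x₂ t - u 0 0 t₀‖ + ‖v x₁ x₂ t - v 0 0 t₀‖ :=
            abs_sub_le'' _ _
        _ ≤ C₄ * prho x₁ x₂ t 0 0 t₀ + C₄ * prho x₁ x₂ t 0 0 t₀ :=
            add_le_add (hu (x₁, x₂, t) hp (0, 0, t₀) hq) (hv (x₁, x₂, t) hp (0, 0, t₀) hq)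
        _ = 2 * C₄ * prho x₁ x₂ t 0 0 t₀ := by ring
        _ ≤ 2 * C₄ * (4 * ε ^ l₀) :=
            mul_le_mul_of_nonneg_left hρ (by positivity)
        _ = 8 * C₄ * ε ^ l₀ := by ring
    -- Hölder bound
    have hHb : ‖H (u x₁ x₂ t) - H (v x₁ x₂ t)‖
        ≤ C₁ * max 1 (8 * C₄) * ε ^ e := by
      have h1 : ‖H (u x₁ x₂ t) - H (v x₁ x₂ t)‖
          ≤ C₁ * ‖u x₁ x₂ t - v x₁ x₂ t‖ ^ α₁ := hH _ _
      have h2 : ‖u x₁ x₂ t - v x₁ x₂ t‖ ^ α₁ ≤ (8 * C₄ * ε ^ l₀) ^ α₁ :=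
        Real.rpow_le_rpow (norm_nonneg _) huvb hα₁.1.le
      have h3 : (8 * C₄ * ε ^ l₀) ^ α₁ = (8 * C₄) ^ α₁ * ε ^ (l₀ * α₁) := by
        rw [Real.mul_rpow (by positivity) hεl₀.le, Real.rpow_mul hε0.le]
      have h4 : (8 * C₄) ^ α₁ ≤ max 1 (8 * C₄) := by
        rcases le_or_gt (8 * C₄) 1 with h | h
        · exact le_trans (Real.rpow_le_one (by positivity) h hα₁.1.le) (le_max_left _ _)
        · calc (8 * C₄) ^ α₁ ≤ (8 * C₄) ^ (1:ℝ) :=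
              Real.rpow_le_rpow_of_exponent_le h.le hα₁.2.le
          _ = 8 * C₄ := Real.rpow_one _
          _ ≤ max 1 (8 * C₄) := le_max_right _ _
      have h5 : ε ^ (l₀ * α₁) ≤ ε ^ e := by
        apply Real.rpow_le_rpow_of_exponent_ge hε0 hε1.le
        rw [hedef]
        nlinarith [mul_nonneg (mul_nonneg hα₁.1.le hl₀.le) (sub_nonneg.mpr hα₄.2.le)]
      calc ‖H (u x₁ x₂ t) - H (v x₁ x₂ t)‖
          ≤ C₁ * ((8 * C₄) ^ α₁ * ε ^ (l₀ * α₁)) := by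
            rw [← h3]; exact le_trans h1 (mul_le_mul_of_nonneg_left h2 hC₁.le)
        _ ≤ C₁ * (max 1 (8 * C₄) * ε ^ e) := by
            refine mul_le_mul_of_nonneg_left ?_ hC₁.le
            exact mul_le_mul h4 h5 (Real.rpow_nonneg hε0.le _) hmax.le
        _ = C₁ * max 1 (8 * C₄) * ε ^ e := by ring
    -- CGO bound
    have hcgo : ‖cgo2 μ lam s d₁ d₂ x₁ x₂ t‖ ≤ M := by
      rw [cgo2_abs, hMdef]
      apply Real.exp_le_exp.mpr
      have h1 : s * d₁ * x₁ ≤ 0 :=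
        mul_nonpos_iff.mpr (Or.inr ⟨mul_nonpos_iff.mpr (Or.inl ⟨hs.le, hd₁.le⟩), hx₁.1.le⟩)
      have hx₂lo : -ε ≤ x₂ := le_trans hγlo hx₂.1.le
      have e1 : d₂ * x₂ ≤ d₂ * (-ε) := mul_le_mul_of_nonpos_left hx₂lo hd₂.le
      have e2 : (-d₂) * ε ≤ 1 * ε := mul_le_mul_of_nonneg_right hd₂1 hε0.le
      have h2 : s * d₂ * x₂ ≤ 1 := by
        calc s * d₂ * x₂ = s * (d₂ * x₂) := by ring
        _ ≤ s * (d₂ * (-ε)) := mul_le_mul_of_nonneg_left e1 hs.le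
        _ = s * ((-d₂) * ε) := by ring
        _ ≤ s * (1 * ε) := mul_le_mul_of_nonneg_left e2 hs.le
        _ = s * ε := by ring
        _ ≤ 1 := hsε
      have h3 : (Real.sqrt μ)⁻¹ * (s * d₁ * x₁ + s * d₂ * x₂) ≤ (Real.sqrt μ)⁻¹ * 1 :=
        mul_le_mul_of_nonneg_left (by linarith) hsqrtμ
      have h4 : lam * t ≤ lam * T :=
        mul_le_mul_of_nonneg_left (by linarith [ht.2]) hlam.le
      linarith
    calc ‖(H (u x₁ x₂ t) - H (v x₁ x₂ t)) * cgo2 μ lam s d₁ d₂ x₁ x₂ t‖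
        = ‖H (u x₁ x₂ t) - H (v x₁ x₂ t)‖ *
            ‖cgo2 μ lam s d₁ d₂ x₁ x₂ t‖ := norm_mul _ _
      _ ≤ (C₁ * max 1 (8 * C₄) * ε ^ e) * M :=
          mul_le_mul hHb hcgo (norm_nonneg _) (by positivity)
      _ = M * C₁ * max 1 (8 * C₄) * ε ^ e := by ring
  -- bound on the inner integral
  set B := 2 * M * C₁ * max 1 (8 * C₄) * ε ^ e with hBdef
  have hT₁mem : T₁ ∈ Set.Icc T₁ T₂ := ⟨le_refl _, by nlinarith⟩
  have hT₂mem : T₂ ∈ Set.Icc T₁ T₂ := ⟨by nlinarith, le_refl _⟩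
  have inner : ∀ x₁ ∈ Set.Ioc (0:ℝ) (ε ^ l),
      ‖∫ x₂ in (γ x₁)..(γ x₁ + ε),
        ((H (u x₁ x₂ T₂) - H (v x₁ x₂ T₂)) * cgo2 μ lam s d₁ d₂ x₁ x₂ T₂
          - (H (u x₁ x₂ T₁) - H (v x₁ x₂ T₁)) * cgo2 μ lam s d₁ d₂ x₁ x₂ T₁)‖
        ≤ B * ε := by
    intro x₁ hx₁
    have hb : ∀ x₂ ∈ Set.uIoc (γ x₁) (γ x₁ + ε),
        ‖(H (u x₁ x₂ T₂) - H (v x₁ x₂ T₂)) * cgo2 μ lam s d₁ d₂ x₁ x₂ T₂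
          - (H (u x₁ x₂ T₁) - H (v x₁ x₂ T₁)) * cgo2 μ lam s d₁ d₂ x₁ x₂ T₁‖ ≤ B := by
      intro x₂ hx₂
      rw [Set.uIoc_of_le (by linarith)] at hx₂
      calc ‖(H (u x₁ x₂ T₂) - H (v x₁ x₂ T₂)) * cgo2 μ lam s d₁ d₂ x₁ x₂ T₂
            - (H (u x₁ x₂ T₁) - H (v x₁ x₂ T₁)) * cgo2 μ lam s d₁ d₂ x₁ x₂ T₁‖
          ≤ ‖(H (u x₁ x₂ T₂) - H (v x₁ x₂ T₂)) * cgo2 μ lam s d₁ d₂ x₁ x₂ T₂‖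
            + ‖(H (u x₁ x₂ T₁) - H (v x₁ x₂ T₁)) * cgo2 μ lam s d₁ d₂ x₁ x₂ T₁‖ :=
          abs_sub_le'' _ _
        _ ≤ M * C₁ * max 1 (8 * C₄) * ε ^ e + M * C₁ * max 1 (8 * C₄) * ε ^ e :=
          add_le_add (key x₁ hx₁ x₂ hx₂ T₂ hT₂mem) (key x₁ hx₁ x₂ hx₂ T₁ hT₁mem)
        _ = B := by rw [hBdef]; ring
    have h := intervalIntegral.norm_integral_le_of_norm_le_const hb
    rwa [show γ x₁ + ε - γ x₁ = ε by ring, abs_of_pos hε0] at h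
  -- bound on the outer integral
  have hbo : ∀ x₁ ∈ Set.uIoc (0:ℝ) (ε ^ l),
      ‖∫ x₂ in (γ x₁)..(γ x₁ + ε),
        ((H (u x₁ x₂ T₂) - H (v x₁ x₂ T₂)) * cgo2 μ lam s d₁ d₂ x₁ x₂ T₂
          - (H (u x₁ x₂ T₁) - H (v x₁ x₂ T₁)) * cgo2 μ lam s d₁ d₂ x₁ x₂ T₁)‖
        ≤ B * ε := by
    intro x₁ hx₁
    rw [Set.uIoc_of_le hεl.le] at hx₁
    exact inner x₁ hx₁
  have outer := intervalIntegral.norm_integral_le_of_norm_le_const hbo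
  rw [sub_zero, abs_of_pos hεl] at outer
  refine le_trans outer (le_of_eq ?_)
  rw [hBdef, hedef, hl₀def, Real.rpow_add hε0, Real.rpow_add hε0, Real.rpow_one]
  ring
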